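/- For r > 0 and θ ∈ [0,π], the quaternionic matrix g = [[0, j],[j, 0]] satisfies g·A·g⁻¹ = A⁻¹, where A = diag(r·e^{iθ}, r⁻¹·e^{iθ}). In particular A is reversible in SL(2,ℍ) via a skew-involution (g² = -I). -/

import Mathlib

/-- The quaternion `cos θ + (sin θ) i`, i.e. `e^{iθ}` inside the quaternions. -/
noncomputable def eI (θ : ℝ) : Quaternion ℝ := ⟨Real.cos θ, Real.sin θ, 0, 0⟩

/-- The quaternion unit `j`. -/
def qj : Quaternion ℝ := ⟨0, 0, 1, 0⟩

/-- The standard complex embedding `Φ` of a 2×2 quaternionic matrix `A = A₁ + A₂ j`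
as the 4×4 complex block matrix `[[A₁, A₂], [-conj A₂, conj A₁]]`. -/
noncomputable def Phi (A : Matrix (Fin 2) (Fin 2) (Quaternion ℝ)) :
    Matrix (Fin 2 ⊕ Fin 2) (Fin 2 ⊕ Fin 2) ℂ :=
  Matrix.fromBlocks
    (A.map fun q => (⟨q.re, q.imI⟩ : ℂ))
    (A.map fun q => (⟨q.imJ, q.imK⟩ : ℂ))
    (-(A.map fun q => (⟨q.imJ, -q.imK⟩ : ℂ)))
    (A.map fun q => (⟨q.re, -q.imI⟩ : ℂ))

/-- The quaternionic determinant: the determinant of the complex embedding. -/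
noncomputable def detH (A : Matrix (Fin 2) (Fin 2) (Quaternion ℝ)) : ℂ := (Phi A).det

set_option maxHeartbeats 2000000 in
/-- g = [[0,j],[j,0]] conjugates A = diag(r e^{iθ}, r⁻¹ e^{iθ}) to
A⁻¹ = diag(r⁻¹ e^{-iθ}, r e^{-iθ}); moreover g² = -1 (so g⁻¹ = -g): A is reversible in
SL(2,ℍ) via a skew-involution. -/
theorem diag_same_angle_reversible (r θ : ℝ) (hr : 0 < r) (hθ : θ ∈ Set.Icc 0 Real.pi) :
    !![(r : Quaternion ℝ) * eI θ, 0; 0, ((r⁻¹ : ℝ) : Quaternion ℝ) * eI θ] *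
        !![((r⁻¹ : ℝ) : Quaternion ℝ) * eI (-θ), 0; 0, (r : Quaternion ℝ) * eI (-θ)] = 1 ∧
      !![((r⁻¹ : ℝ) : Quaternion ℝ) * eI (-θ), 0; 0, (r : Quaternion ℝ) * eI (-θ)] *
        !![(r : Quaternion ℝ) * eI θ, 0; 0, ((r⁻¹ : ℝ) : Quaternion ℝ) * eI θ] = 1 ∧
      !![(0 : Quaternion ℝ), qj; qj, 0] * !![(0 : Quaternion ℝ), qj; qj, 0] = -1 ∧
      !![(0 : Quaternion ℝ), qj; qj, 0] *
          !![(r : Quaternion ℝ) * eI θ, 0; 0, ((r⁻¹ : ℝ) : Quaternion ℝ) * eI θ] *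
          (-(!![(0 : Quaternion ℝ), qj; qj, 0])) =
        !![((r⁻¹ : ℝ) : Quaternion ℝ) * eI (-θ), 0; 0, (r : Quaternion ℝ) * eI (-θ)] := by
  have hr' : r ≠ 0 := hr.ne'
  have hpyth := Real.sin_sq_add_cos_sq θ
  have h1 : ((r : Quaternion ℝ) * eI θ) * (((r⁻¹ : ℝ) : Quaternion ℝ) * eI (-θ)) = 1 := by
    ext <;>
      simp only [Quaternion.re_mul, Quaternion.imI_mul, Quaternion.imJ_mul, Quaternion.imK_mul,
        Quaternion.re_neg, Quaternion.imI_neg, Quaternion.imJ_neg, Quaternion.imK_neg,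
        Quaternion.re_coe, Quaternion.imI_coe, Quaternion.imJ_coe, Quaternion.imK_coe,
        Quaternion.re_one, Quaternion.imI_one, Quaternion.imJ_one, Quaternion.imK_one] <;>
      simp [-Quaternion.coe_inv, eI, Quaternion.re_mul, Quaternion.imI_mul,
        Quaternion.imJ_mul, Quaternion.imK_mul, Real.cos_neg, Real.sin_neg] <;>
      field_simp <;> nlinarith [hpyth, hr]
  have h2 : (((r⁻¹ : ℝ) : Quaternion ℝ) * eI (-θ)) * ((r : Quaternion ℝ) * eI θ) = 1 := by
    ext <;>
      simp only [Quaternion.re_mul, Quaternion.imI_mul, Quaternion.imJ_mul, Quaternion.imK_mul,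
        Quaternion.re_neg, Quaternion.imI_neg, Quaternion.imJ_neg, Quaternion.imK_neg,
        Quaternion.re_coe, Quaternion.imI_coe, Quaternion.imJ_coe, Quaternion.imK_coe,
        Quaternion.re_one, Quaternion.imI_one, Quaternion.imJ_one, Quaternion.imK_one] <;>
      simp [-Quaternion.coe_inv, eI, Quaternion.re_mul, Quaternion.imI_mul,
        Quaternion.imJ_mul, Quaternion.imK_mul, Real.cos_neg, Real.sin_neg] <;>
      field_simp <;> nlinarith [hpyth, hr]
  have h1' : (((r⁻¹ : ℝ) : Quaternion ℝ) * eI θ) * ((r : Quaternion ℝ) * eI (-θ)) = 1 := by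
    ext <;>
      simp only [Quaternion.re_mul, Quaternion.imI_mul, Quaternion.imJ_mul, Quaternion.imK_mul,
        Quaternion.re_neg, Quaternion.imI_neg, Quaternion.imJ_neg, Quaternion.imK_neg,
        Quaternion.re_coe, Quaternion.imI_coe, Quaternion.imJ_coe, Quaternion.imK_coe,
        Quaternion.re_one, Quaternion.imI_one, Quaternion.imJ_one, Quaternion.imK_one] <;>
      simp [-Quaternion.coe_inv, eI, Quaternion.re_mul, Quaternion.imI_mul,
        Quaternion.imJ_mul, Quaternion.imK_mul, Real.cos_neg, Real.sin_neg] <;>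
      field_simp <;> nlinarith [hpyth, hr]
  have h2' : ((r : Quaternion ℝ) * eI (-θ)) * (((r⁻¹ : ℝ) : Quaternion ℝ) * eI θ) = 1 := by
    ext <;>
      simp only [Quaternion.re_mul, Quaternion.imI_mul, Quaternion.imJ_mul, Quaternion.imK_mul,
        Quaternion.re_neg, Quaternion.imI_neg, Quaternion.imJ_neg, Quaternion.imK_neg,
        Quaternion.re_coe, Quaternion.imI_coe, Quaternion.imJ_coe, Quaternion.imK_coe,
        Quaternion.re_one, Quaternion.imI_one, Quaternion.imJ_one, Quaternion.imK_one] <;>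
      simp [-Quaternion.coe_inv, eI, Quaternion.re_mul, Quaternion.imI_mul,
        Quaternion.imJ_mul, Quaternion.imK_mul, Real.cos_neg, Real.sin_neg] <;>
      field_simp <;> nlinarith [hpyth, hr]
  have hjj : qj * qj = -1 := by
    ext <;> simp only [Quaternion.re_mul, Quaternion.imI_mul, Quaternion.imJ_mul, Quaternion.imK_mul,
        Quaternion.re_neg, Quaternion.imI_neg, Quaternion.imJ_neg, Quaternion.imK_neg,
        Quaternion.re_coe, Quaternion.imI_coe, Quaternion.imJ_coe, Quaternion.imK_coe,
        Quaternion.re_one, Quaternion.imI_one, Quaternion.imJ_one, Quaternion.imK_one] <;>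
      simp [qj, Quaternion.re_mul, Quaternion.imI_mul, Quaternion.imJ_mul,
      Quaternion.imK_mul]
  have hg1 : qj * ((r : Quaternion ℝ) * eI θ) * qj = -(((r : Quaternion ℝ)) * eI (-θ)) := by
    ext <;>
      simp only [Quaternion.re_mul, Quaternion.imI_mul, Quaternion.imJ_mul, Quaternion.imK_mul,
        Quaternion.re_neg, Quaternion.imI_neg, Quaternion.imJ_neg, Quaternion.imK_neg,
        Quaternion.re_coe, Quaternion.imI_coe, Quaternion.imJ_coe, Quaternion.imK_coe,
        Quaternion.re_one, Quaternion.imI_one, Quaternion.imJ_one, Quaternion.imK_one] <;>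
      simp [-Quaternion.coe_inv, eI, qj, Quaternion.re_mul, Quaternion.imI_mul,
        Quaternion.imJ_mul, Quaternion.imK_mul, Real.cos_neg, Real.sin_neg]
  have hg2 : qj * (((r⁻¹ : ℝ) : Quaternion ℝ) * eI θ) * qj
      = -((((r⁻¹ : ℝ) : Quaternion ℝ)) * eI (-θ)) := by
    ext <;>
      simp only [Quaternion.re_mul, Quaternion.imI_mul, Quaternion.imJ_mul, Quaternion.imK_mul,
        Quaternion.re_neg, Quaternion.imI_neg, Quaternion.imJ_neg, Quaternion.imK_neg,
        Quaternion.re_coe, Quaternion.imI_coe, Quaternion.imJ_coe, Quaternion.imK_coe,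
        Quaternion.re_one, Quaternion.imI_one, Quaternion.imJ_one, Quaternion.imK_one] <;>
      simp [-Quaternion.coe_inv, eI, qj, Quaternion.re_mul, Quaternion.imI_mul,
        Quaternion.imJ_mul, Quaternion.imK_mul, Real.cos_neg, Real.sin_neg]
  have hneg : -(!![(0 : Quaternion ℝ), qj; qj, 0]) = !![0, -qj; -qj, 0] := by
    ext i j <;> fin_cases i <;> fin_cases j <;> simp
  refine ⟨?_, ?_, ?_, ?_⟩
  · rw [Matrix.mul_fin_two]
    simp only [mul_zero, zero_mul, add_zero, zero_add, h1, h1']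
    exact Matrix.one_fin_two.symm
  · rw [Matrix.mul_fin_two]
    simp only [mul_zero, zero_mul, add_zero, zero_add, h2, h2']
    exact Matrix.one_fin_two.symm
  · rw [Matrix.mul_fin_two]
    simp only [mul_zero, zero_mul, add_zero, zero_add, hjj]
    ext i j <;> fin_cases i <;> fin_cases j <;> simp [Matrix.one_apply]
  · rw [Matrix.mul_fin_two, hneg, Matrix.mul_fin_two]
    simp only [mul_zero, zero_mul, add_zero, zero_add, mul_neg, hg1, hg2, neg_neg, neg_zero]
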